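/- For all sets E, F ⊆ ℝⁿ (not necessarily Borel), for Lebesgue almost every z ∈ ℝⁿ, dimH(E ∩ (F + z)) ≤ max{0, dimH(E × F) − n}. -/

import Mathlib

open Filter Metric MeasureTheory Set
open scoped ENNReal Topology

namespace AD

/-- Partial recursiveness relative to an oracle `O : ℕ →. ℕ`. -/
inductive OPartrec (O : ℕ →. ℕ) : (ℕ →. ℕ) → Prop
  | oracle : OPartrec O O
  | zero : OPartrec O (pure 0)
  | succ : OPartrec O Nat.succ
  | left : OPartrec O ↑fun n : ℕ => n.unpair.1
  | right : OPartrec O ↑fun n : ℕ => n.unpair.2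
  | pair {f g} : OPartrec O f → OPartrec O g →
      OPartrec O fun n => Nat.pair <$> f n <*> g n
  | comp {f g} : OPartrec O f → OPartrec O g → OPartrec O fun n => g n >>= f
  | prec {f g} : OPartrec O f → OPartrec O g → OPartrec O (Nat.unpaired fun a n =>
      n.rec (f a) fun y IH => do let i ← IH; g (Nat.pair a (Nat.pair y i)))
  | rfind {f} : OPartrec O f →
      OPartrec O fun a => Nat.rfind fun n => (fun m => m = 0) <$> f (Nat.pair a n)

/-- The characteristic-function oracle of a set `A ⊆ ℕ`. -/
noncomputable def charOracle (A : Set ℕ) : ℕ →. ℕ :=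
  fun k => Part.some (A.indicator (fun _ => 1) k)

/-- The trivial (computable) oracle; relativization to it yields plain computability. -/
def zeroOracle : ℕ →. ℕ := fun _ => Part.some 0

/-- The `ℕ →. ℕ` function on encoded inputs induced by a machine on binary strings. -/
def strFun (M : List Bool →. ℕ) : ℕ →. ℕ :=
  fun k => Part.ofOption (Encodable.decode (α := List Bool) k) >>= M

/-- `M` is a prefix(-free) Turing machine relative to the oracle `O`. -/
structure PrefixMachine (O : ℕ →. ℕ) (M : List Bool →. ℕ) : Prop where
  opartrec : OPartrec O (strFun M)
  prefixFree : ∀ p q : List Bool, (M p).Dom → (M q).Dom → p <+: q → p = q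

/-- `M` is a plain (unrelativized) prefix Turing machine. -/
structure PlainPrefixMachine (M : List Bool →. ℕ) : Prop where
  partrec : Nat.Partrec (strFun M)
  prefixFree : ∀ p q : List Bool, (M p).Dom → (M q).Dom → p <+: q → p = q

/-- The prefix Kolmogorov complexity of (the code of) a natural number `k`
relative to the machine `M`: the length of a shortest program for `k`. -/
noncomputable def KM (M : List Bool →. ℕ) (k : ℕ) : ℕ :=
  sInf {l | ∃ p : List Bool, p.length = l ∧ k ∈ M p}

/-- `U` is a universal oracle prefix machine (a family, one machine per oracle,
optimal up to an additive constant among all prefix machines with that oracle). -/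
structure UniversalOraclePrefixMachine (U : (ℕ →. ℕ) → List Bool →. ℕ) : Prop where
  isMachine : ∀ O, PrefixMachine O (U O)
  universal : ∀ O M, PrefixMachine O M → ∃ c : ℕ, ∀ k : ℕ, ∀ p : List Bool,
      k ∈ M p → ∃ q : List Bool, k ∈ U O q ∧ q.length ≤ p.length + c

/-- `V` is a (plain) universal prefix machine. -/
structure UniversalPrefixMachine (V : List Bool →. ℕ) : Prop where
  isMachine : PlainPrefixMachine V
  universal : ∀ M, PlainPrefixMachine M → ∃ c : ℕ, ∀ k : ℕ, ∀ p : List Bool,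
      k ∈ M p → ∃ q : List Bool, k ∈ V q ∧ q.length ≤ p.length + c

variable {n : ℕ}

/-- The point of `ℝⁿ` with the given rational coordinates. -/
noncomputable def ratPt (q : Fin n → ℚ) : EuclideanSpace ℝ (Fin n) := WithLp.toLp 2 (fun i => (q i : ℝ))

/-- `K_r(x)`: the Kolmogorov complexity of `x ∈ ℝⁿ` at precision `r`, relative to the
machine `V`: the minimum complexity of a rational point within distance `2^{-r}` of `x`. -/
noncomputable def Kr (V : List Bool →. ℕ) (x : EuclideanSpace ℝ (Fin n)) (r : ℕ) : ℕ :=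
  sInf {l | ∃ q : Fin n → ℚ, dist (ratPt q) x < 2⁻¹ ^ r ∧ l = KM V (Encodable.encode q)}

/-- The algorithmic dimension of a point, w.r.t. the machine `V`. -/
noncomputable def adim (V : List Bool →. ℕ) (x : EuclideanSpace ℝ (Fin n)) : ℝ :=
  liminf (fun r : ℕ => (Kr V x r : ℝ) / r) atTop

/-- The strong algorithmic dimension of a point, w.r.t. the machine `V`. -/
noncomputable def aDim (V : List Bool →. ℕ) (x : EuclideanSpace ℝ (Fin n)) : ℝ :=
  limsup (fun r : ℕ => (Kr V x r : ℝ) / r) atTop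

/-- The Kolmogorov complexity of a set `E ⊆ ℝⁿ`: the minimal complexity of a rational
point of `E` (with the convention `K(∅) = ∞`, via `ℕ∞`-valued infimum). -/
noncomputable def KSet (V : List Bool →. ℕ) (E : Set (EuclideanSpace ℝ (Fin n))) : ℕ∞ :=
  sInf {m | ∃ q : Fin n → ℚ, ratPt q ∈ E ∧ m = (KM V (Encodable.encode q) : ℕ∞)}

/-- A canonical oracle encoding a point `y ∈ ℝⁿ`: on input `r` it returns the code of the
dyadic rational approximation of `y` with denominator `2^r`. -/
noncomputable def pointOracle (y : EuclideanSpace ℝ (Fin n)) : ℕ →. ℕ :=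
  fun r => Part.some (Encodable.encode (fun i => ((⌊y i * 2 ^ r⌋ : ℚ) / 2 ^ r) : Fin n → ℚ))

variable {X : Type*} [MetricSpace X]

/-- Covering number of `E` at scale `2^{-r}`. -/
noncomputable def coverNum (E : Set X) (r : ℕ) : ℕ :=
  sInf {k | ∃ S : Finset X, S.card = k ∧ E ⊆ ⋃ c ∈ S, ball c (2⁻¹ ^ r)}

/-- Upper box-counting (Minkowski) dimension. -/
noncomputable def upperBoxDim (E : Set X) : ℝ :=
  limsup (fun r : ℕ => Real.logb 2 (coverNum E r) / r) atTop

/-- Classical packing dimension, via its characterization as the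
modified upper box dimension. -/
noncomputable def packingDim (E : Set X) : ℝ :=
  sInf {d | ∃ C : ℕ → Set X, (∀ i, Bornology.IsBounded (C i)) ∧ E ⊆ ⋃ i, C i ∧
    d = ⨆ i, upperBoxDim (C i)}

end AD

open AD



section SlicingHelpers

open EMetric

/-- Volume of a set in `ℝⁿ` is at most a constant times `diam ^ n`. -/
lemma vol_le_diam_pow (n : ℕ) (s : Set (EuclideanSpace ℝ (Fin n))) :
    volume s ≤ volume (Metric.ball (0 : EuclideanSpace ℝ (Fin n)) 1) *
      EMetric.diam s ^ (n : ℝ) := by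
  rcases s.eq_empty_or_nonempty with rfl | ⟨c, hc⟩
  · simp
  by_cases hd : EMetric.diam s = ∞
  · rcases Nat.eq_zero_or_pos n with hn | hn
    · have hsub : EMetric.diam s = 0 := by
        apply EMetric.diam_subsingleton
        intro x _ y _
        ext i
        exact absurd i.2 (by omega)
      rw [hsub] at hd; simp at hd
    · rw [hd, ENNReal.top_rpow_of_pos (by exact_mod_cast hn), ENNReal.mul_top
        (measure_ball_pos volume (0 : EuclideanSpace ℝ (Fin n)) one_pos).ne']
      exact le_top
  · set d : ℝ := (EMetric.diam s).toReal with hdr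
    have hd0 : 0 ≤ d := ENNReal.toReal_nonneg
    have hsub : s ⊆ Metric.closedBall c d := by
      intro x hx
      rw [Metric.mem_closedBall, dist_edist]
      exact ENNReal.toReal_mono hd (EMetric.edist_le_diam_of_mem hx hc)
    calc volume s ≤ volume (Metric.closedBall c d) := measure_mono hsub
      _ = ENNReal.ofReal (d ^ Module.finrank ℝ (EuclideanSpace ℝ (Fin n))) *
            volume (Metric.ball (0 : EuclideanSpace ℝ (Fin n)) 1) :=
          MeasureTheory.Measure.addHaar_closedBall _ _ hd0
      _ = volume (Metric.ball (0 : EuclideanSpace ℝ (Fin n)) 1) * EMetric.diam s ^ (n : ℝ) := by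
          rw [finrank_euclideanSpace_fin, ENNReal.ofReal_pow hd0, hdr,
            ENNReal.ofReal_toReal hd, ← ENNReal.rpow_natCast, mul_comm]

/-- The core slicing estimate: if `μH[n+t] A = 0` for `A ⊆ ℝⁿ × ℝⁿ`, then almost every
vertical slice of `A` is `μH[t]`-null. -/
lemma slicing_ae (n : ℕ) {t : ℝ} (ht : 0 < t)
    (A : Set (EuclideanSpace ℝ (Fin n) × EuclideanSpace ℝ (Fin n)))
    (hA : μH[(n : ℝ) + t] A = 0) :
    ∀ᵐ z ∂(volume : Measure (EuclideanSpace ℝ (Fin n))), μH[t] {x | (x, z) ∈ A} = 0 := by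
  have hnt : (0 : ℝ) < (n : ℝ) + t := by positivity
  -- choose good covers
  have hcov : ∀ k : ℕ, ∃ U : ℕ → Set (EuclideanSpace ℝ (Fin n) × EuclideanSpace ℝ (Fin n)),
      (A ⊆ ⋃ i, U i) ∧ (∀ i, EMetric.diam (U i) ≤ 2⁻¹ ^ k) ∧
      ∑' i, EMetric.diam (U i) ^ ((n : ℝ) + t) ≤ 2⁻¹ ^ k := by
    intro k
    have hre : (0 : ℝ≥0∞) < 2⁻¹ ^ k := by
      apply ENNReal.pow_pos; norm_num
    have h2 := MeasureTheory.Measure.hausdorffMeasure_apply ((n : ℝ) + t) A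
    have h3 : (⨅ (U : ℕ → Set (EuclideanSpace ℝ (Fin n) × EuclideanSpace ℝ (Fin n)))
        (_ : A ⊆ ⋃ i, U i) (_ : ∀ i, EMetric.diam (U i) ≤ 2⁻¹ ^ k),
        ∑' i, ⨆ _ : (U i).Nonempty, EMetric.diam (U i) ^ ((n : ℝ) + t)) ≤ μH[(n : ℝ) + t] A := by
      rw [h2]
      exact le_iSup₂ (f := fun (r : ℝ≥0∞) (_ : 0 < r) =>
        ⨅ (U : ℕ → Set (EuclideanSpace ℝ (Fin n) × EuclideanSpace ℝ (Fin n)))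
          (_ : A ⊆ ⋃ i, U i) (_ : ∀ i, EMetric.diam (U i) ≤ r),
          ∑' i, ⨆ _ : (U i).Nonempty, EMetric.diam (U i) ^ ((n : ℝ) + t)) (2⁻¹ ^ k) hre
    have h1 := lt_of_le_of_lt (h3.trans_eq hA) hre
    rw [iInf_lt_iff] at h1
    obtain ⟨U, hU⟩ := h1
    rw [iInf_lt_iff] at hU
    obtain ⟨hUc, hU⟩ := hU
    rw [iInf_lt_iff] at hU
    obtain ⟨hUd, hU⟩ := hU
    refine ⟨U, hUc, hUd, ?_⟩
    have heq : ∑' i, EMetric.diam (U i) ^ ((n : ℝ) + t) =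
        ∑' i, ⨆ _ : (U i).Nonempty, EMetric.diam (U i) ^ ((n : ℝ) + t) := by
      refine tsum_congr fun i => ?_
      rcases (U i).eq_empty_or_nonempty with hUe | hUe
      · rw [hUe]
        simp [EMetric.diam, EMetric.diam_empty, ENNReal.zero_rpow_of_pos hnt]
      · simp [hUe]
    rw [heq]
    exact hU.le
  choose U hUcov hUdiam hUsum using hcov
  set hull : ℕ → ℕ → Set (EuclideanSpace ℝ (Fin n)) :=
    fun k i => toMeasurable volume (Prod.snd '' U k i) with hhull
  set g : ℕ → EuclideanSpace ℝ (Fin n) → ℝ≥0∞ := fun k z =>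
    ∑' i, (hull k i).indicator (fun _ => EMetric.diam (U k i) ^ t) z with hg
  have hgmeas : ∀ k, Measurable (g k) := fun k =>
    Measurable.ennreal_tsum fun i =>
      measurable_const.indicator (measurableSet_toMeasurable _ _)
  set C : ℝ≥0∞ := volume (Metric.ball (0 : EuclideanSpace ℝ (Fin n)) 1) with hC
  have hCfin : C ≠ ∞ := measure_ball_lt_top.ne
  have hgint : ∀ k, ∫⁻ z, g k z ≤ C * 2⁻¹ ^ k := by
    intro k
    rw [hg]
    simp only
    rw [lintegral_tsum fun i =>
      (measurable_const.indicator (measurableSet_toMeasurable _ _)).aemeasurable]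
    have hterm : ∀ i, ∫⁻ z, (hull k i).indicator (fun _ => EMetric.diam (U k i) ^ t) z ∂volume
        ≤ C * EMetric.diam (U k i) ^ ((n : ℝ) + t) := by
      intro i
      rw [lintegral_indicator (measurableSet_toMeasurable _ _), setLIntegral_const,
        measure_toMeasurable]
      calc EMetric.diam (U k i) ^ t * volume (Prod.snd '' U k i)
          ≤ EMetric.diam (U k i) ^ t * (C * EMetric.diam (Prod.snd '' U k i) ^ (n : ℝ)) := by
            gcongr
            exact vol_le_diam_pow n _
        _ ≤ EMetric.diam (U k i) ^ t * (C * EMetric.diam (U k i) ^ (n : ℝ)) := by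
            gcongr
            simpa [EMetric.diam] using LipschitzWith.ediam_image_le LipschitzWith.prod_snd (U k i)
        _ = C * EMetric.diam (U k i) ^ ((n : ℝ) + t) := by
            rw [ENNReal.rpow_add_of_nonneg _ _ (Nat.cast_nonneg n) ht.le]
            ring
    calc ∑' i, ∫⁻ z, (hull k i).indicator (fun _ => EMetric.diam (U k i) ^ t) z ∂volume
        ≤ ∑' i, C * EMetric.diam (U k i) ^ ((n : ℝ) + t) := ENNReal.tsum_le_tsum hterm
      _ = C * ∑' i, EMetric.diam (U k i) ^ ((n : ℝ) + t) := ENNReal.tsum_mul_left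
      _ ≤ C * 2⁻¹ ^ k := by gcongr; exact hUsum k
  have hGmeas : Measurable (fun z => liminf (fun k => g k z) atTop) :=
    Measurable.liminf hgmeas
  have hGzero : ∫⁻ z, liminf (fun k => g k z) atTop = 0 := by
    refine le_antisymm ?_ zero_le
    calc ∫⁻ z, liminf (fun k => g k z) atTop
        ≤ liminf (fun k => ∫⁻ z, g k z) atTop := lintegral_liminf_le hgmeas
      _ ≤ liminf (fun k => C * 2⁻¹ ^ k) atTop :=
          liminf_le_liminf (Filter.Eventually.of_forall hgint)
      _ = 0 := by
          apply Filter.Tendsto.liminf_eq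
          have h0 : Filter.Tendsto (fun k : ℕ => (2⁻¹ : ℝ≥0∞) ^ k) atTop (𝓝 0) :=
            ENNReal.tendsto_pow_atTop_nhds_zero_of_lt_one (by norm_num)
          simpa using ENNReal.Tendsto.const_mul h0 (Or.inr hCfin)
  have h0 : ∀ᵐ z ∂(volume : Measure (EuclideanSpace ℝ (Fin n))),
      liminf (fun k => g k z) atTop = 0 := (lintegral_eq_zero_iff hGmeas).mp hGzero
  filter_upwards [h0] with z hz
  refine le_antisymm ?_ zero_le
  have hcover : μH[t] {x | (x, z) ∈ A} ≤
      liminf (fun k => ∑' i, EMetric.diam {x | (x, z) ∈ U k i} ^ t) atTop := by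
    apply MeasureTheory.Measure.hausdorffMeasure_le_liminf_tsum t _
      (fun k : ℕ => (2⁻¹ : ℝ≥0∞) ^ k)
      (ENNReal.tendsto_pow_atTop_nhds_zero_of_lt_one (by norm_num))
      (fun k i => {x | (x, z) ∈ U k i})
    · refine Filter.Eventually.of_forall fun k i => ?_
      refine le_trans ?_ (hUdiam k i)
      apply EMetric.diam_le
      intro x hx y hy
      calc edist x y ≤ edist (x, z) (y, z) := by
            rw [Prod.edist_eq]; exact le_max_left _ _
        _ ≤ EMetric.diam (U k i) := EMetric.edist_le_diam_of_mem hx hy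
    · refine Filter.Eventually.of_forall fun k => ?_
      intro x hx
      obtain ⟨i, hi⟩ := Set.mem_iUnion.mp (hUcov k hx)
      exact Set.mem_iUnion.mpr ⟨i, hi⟩
  refine hcover.trans ?_
  have hptw : ∀ k, ∑' i, EMetric.diam {x | (x, z) ∈ U k i} ^ t ≤ g k z := by
    intro k
    refine ENNReal.tsum_le_tsum fun i => ?_
    by_cases hzi : z ∈ hull k i
    · rw [Set.indicator_of_mem hzi]
      apply ENNReal.rpow_le_rpow _ ht.le
      apply EMetric.diam_le
      intro x hx y hy
      calc edist x y ≤ edist (x, z) (y, z) := by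
            rw [Prod.edist_eq]; exact le_max_left _ _
        _ ≤ EMetric.diam (U k i) := EMetric.edist_le_diam_of_mem hx hy
    · rw [Set.indicator_of_notMem hzi]
      have hVe : {x | (x, z) ∈ U k i} = (∅ : Set (EuclideanSpace ℝ (Fin n))) := by
        rw [Set.eq_empty_iff_forall_notMem]
        intro x hx
        exact hzi (subset_toMeasurable volume _ ⟨(x, z), hx, rfl⟩)
      rw [hVe]
      simp [EMetric.diam, EMetric.diam_empty, ENNReal.zero_rpow_of_pos ht]
  calc liminf (fun k => ∑' i, EMetric.diam {x | (x, z) ∈ U k i} ^ t) atTop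
      ≤ liminf (fun k => g k z) atTop := liminf_le_liminf (Filter.Eventually.of_forall hptw)
    _ = 0 := hz

end SlicingHelpers

/-- for all `E, F ⊆ ℝⁿ`, for Lebesgue a.e. `z ∈ ℝⁿ`,
`dimH(E ∩ (F + z)) ≤ max{0, dimH(E × F) − n}`. -/
theorem intersection_bound (n : ℕ) (E F : Set (EuclideanSpace ℝ (Fin n))) :
    ∀ᵐ z ∂(volume : Measure (EuclideanSpace ℝ (Fin n))),
      dimH (E ∩ ((fun y => y + z) '' F)) ≤ dimH (E ×ˢ F) - n := by
  classical
  have hΦ : LipschitzWith 2 (fun p : EuclideanSpace ℝ (Fin n) × EuclideanSpace ℝ (Fin n) =>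
      (p.1, p.1 - p.2)) := by
    have h2 : LipschitzWith 2 (fun p : EuclideanSpace ℝ (Fin n) × EuclideanSpace ℝ (Fin n) =>
        p.1 - p.2) := by
      have := LipschitzWith.prod_fst.sub
        (LipschitzWith.prod_snd (α := EuclideanSpace ℝ (Fin n)) (β := EuclideanSpace ℝ (Fin n)))
      norm_num at this
      exact this
    have h3 := LipschitzWith.prod_fst.prodMk h2
    exact h3.weaken (by norm_num)
  set A : Set (EuclideanSpace ℝ (Fin n) × EuclideanSpace ℝ (Fin n)) :=
    (fun p : EuclideanSpace ℝ (Fin n) × EuclideanSpace ℝ (Fin n) => (p.1, p.1 - p.2)) ''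
      (E ×ˢ F) with hAdef
  have hD : dimH (E ×ˢ F) ≠ ∞ :=
    ne_top_of_le_ne_top
      (by rw [Real.dimH_univ_eq_finrank]; exact ENNReal.natCast_ne_top _)
      (dimH_mono (Set.subset_univ _))
  set c : NNReal := (dimH (E ×ˢ F) - n).toNNReal with hcdef
  have hc : (c : ℝ≥0∞) = dimH (E ×ˢ F) - n :=
    ENNReal.coe_toNNReal (ne_top_of_le_ne_top hD tsub_le_self)
  set tk : ℕ → NNReal := fun k => c + ((k : NNReal) + 1)⁻¹ with htkdef
  have htkpos : ∀ k, (0 : ℝ) < (tk k : ℝ) := by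
    intro k
    have h1 : (0 : NNReal) < tk k :=
      add_pos_of_nonneg_of_pos (zero_le : 0 ≤ c) (by positivity)
    exact_mod_cast h1
  have hslice : ∀ z : EuclideanSpace ℝ (Fin n),
      {x | (x, z) ∈ A} = E ∩ ((fun y => y + z) '' F) := by
    intro z
    ext x
    constructor
    · rintro ⟨⟨a, b⟩, ⟨haE, hbF⟩, heq⟩
      rw [Prod.ext_iff] at heq
      obtain ⟨ha, hab⟩ := heq
      simp only at ha hab
      subst ha
      refine ⟨haE, b, hbF, ?_⟩
      show b + z = a
      rw [← hab]
      exact add_sub_cancel b a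
    · rintro ⟨hxE, y, hyF, hyz⟩
      refine ⟨(x, y), ⟨hxE, hyF⟩, ?_⟩
      have hxy : x - y = z := by
        rw [← hyz]
        exact add_sub_cancel_left y z
      show (x, x - y) = (x, z)
      rw [hxy]
  have hk : ∀ k : ℕ, ∀ᵐ z ∂(volume : Measure (EuclideanSpace ℝ (Fin n))),
      dimH (E ∩ ((fun y => y + z) '' F)) ≤ (tk k : ℝ≥0∞) := by
    intro k
    have hlt : dimH (E ×ˢ F) < (n : ℝ≥0∞) + (tk k : ℝ≥0∞) := by
      calc dimH (E ×ˢ F) ≤ dimH (E ×ˢ F) - (n : ℝ≥0∞) + (n : ℝ≥0∞) := le_tsub_add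
        _ = (n : ℝ≥0∞) + (c : ℝ≥0∞) := by rw [hc, add_comm]
        _ < (n : ℝ≥0∞) + (tk k : ℝ≥0∞) := by
            apply ENNReal.add_lt_add_left (ENNReal.natCast_ne_top n)
            have h4 : c < tk k := lt_add_of_pos_right c
              (by positivity : (0 : NNReal) < ((k : NNReal) + 1)⁻¹)
            exact_mod_cast h4
    have hEF : μH[(((n : NNReal) + tk k : NNReal) : ℝ)] (E ×ˢ F) = 0 := by
      apply hausdorffMeasure_of_dimH_lt
      push_cast
      exact hlt
    have hAz : μH[(n : ℝ) + (tk k : ℝ)] A = 0 := by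
      have h2 := hΦ.hausdorffMeasure_image_le
        (d := (((n : NNReal) + tk k : NNReal) : ℝ)) (by positivity) (E ×ˢ F)
      rw [hEF, mul_zero] at h2
      have hcast : (((n : NNReal) + tk k : NNReal) : ℝ) = (n : ℝ) + (tk k : ℝ) := by
        push_cast; ring
      rw [hcast] at h2
      exact le_antisymm h2 zero_le
    filter_upwards [slicing_ae n (htkpos k) A hAz] with z hz
    rw [← hslice z]
    exact dimH_le_of_hausdorffMeasure_ne_top (d := tk k)
      (by rw [hz]; exact ENNReal.zero_ne_top)
  filter_upwards [MeasureTheory.ae_all_iff.mpr hk] with z hz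
  rw [← hc]
  have htend : Filter.Tendsto (fun k : ℕ => ((tk k : NNReal) : ℝ≥0∞)) atTop (𝓝 (c : ℝ≥0∞)) := by
    have h1 : Filter.Tendsto (fun k : ℕ => ((k : ℝ≥0∞) + 1)⁻¹) atTop (𝓝 0) := by
      have h2 := ENNReal.tendsto_inv_nat_nhds_zero.comp (Filter.tendsto_add_atTop_nat 1)
      refine h2.congr fun k => ?_
      show (((k + 1 : ℕ)) : ℝ≥0∞)⁻¹ = ((k : ℝ≥0∞) + 1)⁻¹
      norm_cast
    have h3 : Filter.Tendsto (fun k : ℕ => (c : ℝ≥0∞) + ((k : ℝ≥0∞) + 1)⁻¹) atTop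
        (𝓝 ((c : ℝ≥0∞) + 0)) := Filter.Tendsto.add tendsto_const_nhds h1
    rw [add_zero] at h3
    refine h3.congr fun k => ?_
    have hne : ((k : NNReal) + 1) ≠ 0 := by positivity
    have htkk : tk k = c + ((k : NNReal) + 1)⁻¹ := rfl
    rw [htkk, ENNReal.coe_add, ENNReal.coe_inv hne, ENNReal.coe_add,
      ENNReal.coe_natCast, ENNReal.coe_one]
  exact ge_of_tendsto htend (Filter.Eventually.of_forall hz)
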